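/- Let F : Ω × ℝ^k → ℝ be jointly continuous, let f : Ω → ℝ be continuous, and suppose f(x₀) lies in the interior of the range {F(x₀, ξ) : ξ ∈ ℝ^k} for a given x₀ ∈ Ω. Then for every ε > 0 there exist δ > 0 and a polynomial map P : ℝⁿ → ℝ^k (each coordinate a polynomial) such that for all x ∈ Ω with ‖x − x₀‖ ≤ δ, one has f(x) − ε ≤ F(x, P(x)) ≤ f(x). -/

import Mathlib

open Set

theorem local_polynomial_approximation {n k : ℕ}
    (Ω : Set (EuclideanSpace ℝ (Fin n))) (hΩ : IsOpen Ω)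
    (F : EuclideanSpace ℝ (Fin n) × (Fin k → ℝ) → ℝ)
    (hF : ContinuousOn F (Ω ×ˢ (univ : Set (Fin k → ℝ))))
    (f : EuclideanSpace ℝ (Fin n) → ℝ) (hf : ContinuousOn f Ω)
    (x₀ : EuclideanSpace ℝ (Fin n)) (hx₀ : x₀ ∈ Ω)
    (hint : f x₀ ∈ interior {y : ℝ | ∃ ξ : Fin k → ℝ, F (x₀, ξ) = y}) :
    ∀ ε > (0 : ℝ), ∃ δ > (0 : ℝ), ∃ P : Fin k → MvPolynomial (Fin n) ℝ,
      ∀ x ∈ Ω, ‖x - x₀‖ ≤ δ →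
        f x - ε ≤ F (x, fun i => MvPolynomial.eval (fun j => x j) (P i)) ∧
        F (x, fun i => MvPolynomial.eval (fun j => x j) (P i)) ≤ f x := by
  intro ε hε
  -- get radius r of ball inside the range
  obtain ⟨r, hr, hball⟩ := Metric.isOpen_iff.mp isOpen_interior _ hint
  have hball : Metric.ball (f x₀) r ⊆ {y : ℝ | ∃ ξ : Fin k → ℝ, F (x₀, ξ) = y} :=
    hball.trans interior_subset
  set t : ℝ := min (ε / 2) (r / 2) with ht
  have ht0 : 0 < t := lt_min (by linarith) (by linarith)
  have htr : t < r := lt_of_le_of_lt (min_le_right _ _) (by linarith)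
  have htε : 2 * t ≤ ε := by
    have := min_le_left (ε / 2) (r / 2)
    linarith
  -- pick ξ₀ with F (x₀, ξ₀) = f x₀ - t
  have hmem : f x₀ - t ∈ Metric.ball (f x₀) r := by
    simp [Real.dist_eq, abs_of_nonpos, ht0.le]
    rw [abs_of_pos ht0]; exact htr
  obtain ⟨ξ₀, hξ₀⟩ := hball hmem
  -- continuity of x ↦ F (x, ξ₀) at x₀
  have hopen : IsOpen (Ω ×ˢ (univ : Set (Fin k → ℝ))) := hΩ.prod isOpen_univ
  have hFat : ContinuousAt F (x₀, ξ₀) :=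
    hF.continuousAt (hopen.mem_nhds ⟨hx₀, mem_univ _⟩)
  have hpm : ContinuousAt (fun x : EuclideanSpace ℝ (Fin n) => (x, ξ₀)) x₀ :=
    (continuous_id.prodMk continuous_const).continuousAt
  have hg : ContinuousAt (fun x => F (x, ξ₀)) x₀ := ContinuousAt.comp (x := x₀) hFat hpm
  have hfat : ContinuousAt f x₀ := hf.continuousAt (hΩ.mem_nhds hx₀)
  have hs : (0 : ℝ) < t / 3 := by linarith
  obtain ⟨δ₁, hδ₁, h1⟩ := Metric.continuousAt_iff.mp hg (t / 3) hs
  obtain ⟨δ₂, hδ₂, h2⟩ := Metric.continuousAt_iff.mp hfat (t / 3) hs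
  refine ⟨min δ₁ δ₂ / 2, by positivity, fun i => MvPolynomial.C (ξ₀ i), ?_⟩
  intro x hx hxd
  have hx1 : dist x x₀ < δ₁ := by
    rw [dist_eq_norm]
    calc ‖x - x₀‖ ≤ min δ₁ δ₂ / 2 := hxd
    _ < δ₁ := by
      have := min_le_left δ₁ δ₂; linarith
  have hx2 : dist x x₀ < δ₂ := by
    rw [dist_eq_norm]
    calc ‖x - x₀‖ ≤ min δ₁ δ₂ / 2 := hxd
    _ < δ₂ := by
      have := min_le_right δ₁ δ₂; linarith
  have e1 := h1 hx1
  have e2 := h2 hx2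
  rw [Real.dist_eq, hξ₀] at e1
  rw [Real.dist_eq] at e2
  have a1 := abs_lt.mp e1
  have a2 := abs_lt.mp e2
  have heval : (fun i => MvPolynomial.eval (fun j => x j) (MvPolynomial.C (ξ₀ i))) = ξ₀ := by
    funext i; simp
  rw [heval]
  constructor <;> [linarith; linarith]
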